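/- arXiv:1208.1897 — 2 statements merged into one kernel-verified Lean document; each statement's English description precedes it below -/
import Mathlib

section
/- Suppose V is not a simple R-module. Then G(V) is connected if and only if either V is not semisimple, or V is semisimple and contains a direct sum of three simple R-submodules. -/
/-- The vertices of the intersection graph: proper submodules of `V`. -/
def ProperSubmodule (R V : Type*) [Ring R] [AddCommGroup V] [Module R V] :=
  {W : Submodule R V // W ≠ ⊥ ∧ W ≠ ⊤}

/-- The intersection graph of proper submodules of `V`: two distinct proper
submodules are adjacent iff their intersection is nonzero. -/
def intersectionGraph (R V : Type*) [Ring R] [AddCommGroup V] [Module R V] :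
    SimpleGraph (ProperSubmodule R V) where
  Adj U W := U ≠ W ∧ U.1 ⊓ W.1 ≠ ⊥
  symm := ⟨by
    intro U W h
    exact ⟨h.1.symm, by rw [inf_comm]; exact h.2⟩⟩
  loopless := ⟨fun U h => h.1 rfl⟩

section Aux

variable {R V : Type*} [Ring R] [AddCommGroup V] [Module R V]

private lemma vne {U W : ProperSubmodule R V} (h : U.1 ≠ W.1) : U ≠ W :=
  fun e => h (congrArg Subtype.val e)

/-- If `u, w` are complementary atoms, every submodule has a complement. -/
private lemma complement_of_atom_pair {u w : Submodule R V} (hu : IsAtom u) (hw : IsAtom w)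
    (hc : IsCompl u w) (x : Submodule R V) : ∃ y, IsCompl x y := by
  by_cases hxu : u ≤ x
  · have hx : x = u ⊔ w ⊓ x := by
      have h1 := sup_inf_assoc_of_le (x := u) w hxu
      rwa [hc.sup_eq_top, top_inf_eq] at h1
    rcases hw.le_iff.mp (inf_le_left : w ⊓ x ≤ w) with h0 | h0
    · rw [h0, sup_bot_eq] at hx
      exact ⟨w, hx ▸ hc⟩
    · have hwx : w ≤ x := h0.ge.trans inf_le_right
      have : x = ⊤ := top_unique (hc.sup_eq_top ▸ sup_le hxu hwx)
      exact ⟨⊥, this ▸ isCompl_top_bot⟩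
  · have hxu0 : x ⊓ u = ⊥ := by
      rcases hu.le_iff.mp (inf_le_right : x ⊓ u ≤ u) with h0 | h0
      · exact h0
      · exact absurd (h0.ge.trans inf_le_left) hxu
    have hcu : IsCoatom u := hc.symm.isAtom_iff_isCoatom.mp hw
    by_cases hsup : x ⊔ u = ⊤
    · exact ⟨u, IsCompl.of_eq hxu0 hsup⟩
    · rcases hcu.le_iff.mp (le_sup_right : u ≤ x ⊔ u) with h0 | h0
      · exact absurd h0 hsup
      · have hxle : x ≤ u := le_sup_left.trans h0.le
        have : x = ⊥ := by rw [← hxu0, inf_eq_left.mpr hxle]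
        exact ⟨⊤, this ▸ isCompl_bot_top⟩

/-- If `u, w` are complementary atoms, every proper nonzero submodule is an atom. -/
private lemma all_atoms {u w : Submodule R V} (hu : IsAtom u) (hw : IsAtom w)
    (hc : IsCompl u w) {x : Submodule R V} (hx0 : x ≠ ⊥) (hxT : x ≠ ⊤) : IsAtom x := by
  by_cases hxu : u ≤ x
  · have hx : x = u ⊔ w ⊓ x := by
      have h1 := sup_inf_assoc_of_le (x := u) w hxu
      rwa [hc.sup_eq_top, top_inf_eq] at h1
    rcases hw.le_iff.mp (inf_le_left : w ⊓ x ≤ w) with h0 | h0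
    · rw [h0, sup_bot_eq] at hx
      exact hx ▸ hu
    · exact absurd (top_unique (hc.sup_eq_top ▸ sup_le hxu (h0.ge.trans inf_le_right))) hxT
  · have hxu0 : x ⊓ u = ⊥ := by
      rcases hu.le_iff.mp (inf_le_right : x ⊓ u ≤ u) with h0 | h0
      · exact h0
      · exact absurd (h0.ge.trans inf_le_left) hxu
    have hcu : IsCoatom u := hc.symm.isAtom_iff_isCoatom.mp hw
    have hsup : x ⊔ u = ⊤ := by
      rcases hcu.le_iff.mp (le_sup_right : u ≤ x ⊔ u) with h0 | h0
      · exact h0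
      · have hxle : x ≤ u := le_sup_left.trans h0.le
        exact absurd (by rw [← hxu0, inf_eq_left.mpr hxle]) hx0
    exact (IsCompl.of_eq hxu0 hsup).isAtom_iff_isCoatom.mpr hcu

private lemma reach_mid {U W : ProperSubmodule R V} (hmeet : U.1 ⊓ W.1 = ⊥)
    (hsup : U.1 ⊔ W.1 ≠ ⊤) : (intersectionGraph R V).Reachable U W := by
  have hZ0 : U.1 ⊔ W.1 ≠ ⊥ := fun h => U.2.1 (le_bot_iff.mp (le_sup_left.trans h.le))
  set Z : ProperSubmodule R V := ⟨U.1 ⊔ W.1, hZ0, hsup⟩ with hZ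
  have h1 : (intersectionGraph R V).Adj U Z := by
    refine ⟨vne fun h => ?_, ?_⟩
    · have hWU : W.1 ≤ U.1 := by rw [h]; exact le_sup_right
      exact W.2.1 (le_bot_iff.mp ((le_inf hWU le_rfl).trans hmeet.le))
    · show U.1 ⊓ (U.1 ⊔ W.1) ≠ ⊥
      rw [inf_eq_left.mpr le_sup_left]
      exact U.2.1
  have h2 : (intersectionGraph R V).Adj Z W := by
    refine ⟨vne fun h => ?_, ?_⟩
    · have hUW : U.1 ≤ W.1 := by rw [← h]; exact le_sup_left
      exact U.2.1 (le_bot_iff.mp ((le_inf le_rfl hUW).trans hmeet.le))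
    · show (U.1 ⊔ W.1) ⊓ W.1 ≠ ⊥
      rw [inf_eq_right.mpr le_sup_right]
      exact W.2.1
  exact h1.reachable.trans h2.reachable

private lemma reach_of_not_atom {U W : ProperSubmodule R V} (hmeet : U.1 ⊓ W.1 = ⊥)
    (hU : ¬ IsAtom U.1) : (intersectionGraph R V).Reachable U W := by
  have hb : ∃ b, b < U.1 ∧ b ≠ ⊥ := by
    by_contra hcon
    push_neg at hcon
    exact hU ⟨U.2.1, fun b hb => hcon b hb⟩
  obtain ⟨b, hbU, hb0⟩ := hb
  have hbT : b ≠ ⊤ := fun h => U.2.2 (top_unique (h ▸ hbU.le))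
  set U' : ProperSubmodule R V := ⟨b, hb0, hbT⟩ with hU'
  have hadj : (intersectionGraph R V).Adj U U' := by
    refine ⟨vne hbU.ne', ?_⟩
    show U.1 ⊓ b ≠ ⊥
    rw [inf_eq_right.mpr hbU.le]
    exact hb0
  have hm' : U'.1 ⊓ W.1 = ⊥ := le_bot_iff.mp ((inf_le_inf_right _ hbU.le).trans hmeet.le)
  have hs' : U'.1 ⊔ W.1 ≠ ⊤ := by
    intro h
    have h1 := sup_inf_assoc_of_le (x := b) W.1 hbU.le
    rw [show (b ⊔ W.1 : Submodule R V) = ⊤ from h, top_inf_eq, inf_comm W.1 U.1, hmeet,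
      sup_bot_eq] at h1
    exact hbU.ne' h1
  exact hadj.reachable.trans (reach_mid hm' hs')

private lemma not_connected_of_no_edges
    (h : ∀ A B : ProperSubmodule R V, ¬ (intersectionGraph R V).Adj A B)
    {X Y : ProperSubmodule R V} (hXY : X ≠ Y) : ¬ (intersectionGraph R V).Connected := by
  intro hc
  obtain ⟨p⟩ := hc.preconnected X Y
  cases p with
  | nil => exact hXY rfl
  | cons h' _ => exact h _ _ h'

private lemma preconnected_aux
    (h : ∀ u w : Submodule R V, IsAtom u → IsAtom w → ¬ IsCompl u w) :
    (intersectionGraph R V).Preconnected := by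
  intro U W
  rcases eq_or_ne U W with rfl | hne
  · exact SimpleGraph.Reachable.refl U
  by_cases hmeet : U.1 ⊓ W.1 = ⊥
  · by_cases hU : IsAtom U.1
    · by_cases hW : IsAtom W.1
      · have hsup : U.1 ⊔ W.1 ≠ ⊤ := fun ht => h _ _ hU hW (IsCompl.of_eq hmeet ht)
        exact reach_mid hmeet hsup
      · exact (reach_of_not_atom (by rw [inf_comm]; exact hmeet) hW).symm
    · exact reach_of_not_atom hmeet hU
  · exact SimpleGraph.Adj.reachable ⟨hne, hmeet⟩

private lemma exists_three (hss : IsSemisimpleModule R V) {x : Submodule R V}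
    (hx0 : x ≠ ⊥) (hxT : x ≠ ⊤) (hxA : ¬ IsAtom x) :
    ∃ S₁ S₂ S₃ : Submodule R V,
      IsSimpleModule R S₁ ∧ IsSimpleModule R S₂ ∧ IsSimpleModule R S₃ ∧
      S₁ ⊓ (S₂ ⊔ S₃) = ⊥ ∧ S₂ ⊓ (S₁ ⊔ S₃) = ⊥ ∧ S₃ ⊓ (S₁ ⊔ S₂) = ⊥ := by
  haveI : ComplementedLattice (Submodule R V) := hss.toComplementedLattice
  obtain ⟨a, ha, hax⟩ := (eq_bot_or_exists_atom_le x).resolve_left hx0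
  have hax' : a ≠ x := fun h => hxA (h ▸ ha)
  obtain ⟨t, hat⟩ := exists_isCompl a
  have hxt0 : x ⊓ t ≠ ⊥ := by
    intro h0
    have h1 := sup_inf_assoc_of_le (x := a) t hax
    rw [hat.sup_eq_top, top_inf_eq, inf_comm t x, h0, sup_bot_eq] at h1
    exact hax' h1.symm
  obtain ⟨b, hb, hbxt⟩ := (eq_bot_or_exists_atom_le (x ⊓ t)).resolve_left hxt0
  obtain ⟨s, hxs⟩ := exists_isCompl x
  have hs0 : s ≠ ⊥ := fun h => hxT (eq_top_of_isCompl_bot (h ▸ hxs))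
  obtain ⟨c, hc, hcs⟩ := (eq_bot_or_exists_atom_le s).resolve_left hs0
  have hbx : b ≤ x := hbxt.trans inf_le_left
  have hab : a ⊓ b = ⊥ := le_bot_iff.mp
    ((inf_le_inf_left a (hbxt.trans inf_le_right)).trans hat.inf_eq_bot.le)
  have hcab : c ⊓ (a ⊔ b) = ⊥ := le_bot_iff.mp
    ((inf_le_inf hcs (sup_le hax hbx)).trans hxs.symm.inf_eq_bot.le)
  have key : ∀ p q r : Submodule R V, p ⊓ q = ⊥ → r ⊓ (p ⊔ q) = ⊥ → p ⊓ (q ⊔ r) = ⊥ := by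
    intro p q r hpq hr
    have h1 : (q ⊔ r) ⊓ (p ⊔ q) = q := by
      rw [sup_inf_assoc_of_le (x := q) r (le_sup_right : q ≤ p ⊔ q), hr, sup_bot_eq]
    have h2 : p ⊓ (q ⊔ r) = p ⊓ q := by
      conv_lhs => rw [← inf_eq_left.mpr (le_sup_left : p ≤ p ⊔ q)]
      rw [inf_assoc, inf_comm (p ⊔ q) (q ⊔ r), h1]
    rw [h2, hpq]
  refine ⟨a, b, c, isSimpleModule_iff_isAtom.mpr ha, isSimpleModule_iff_isAtom.mpr hb,
    isSimpleModule_iff_isAtom.mpr hc, key a b c hab hcab,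
    key b a c (by rw [inf_comm]; exact hab) (by rwa [sup_comm] at hcab), hcab⟩

end Aux

theorem stmt2 (R V : Type*) [Ring R] [AddCommGroup V] [Module R V]
    (hV : ¬ IsSimpleModule R V) :
    (intersectionGraph R V).Connected ↔
      (¬ IsSemisimpleModule R V) ∨
        (IsSemisimpleModule R V ∧
          ∃ S₁ S₂ S₃ : Submodule R V,
            IsSimpleModule R S₁ ∧ IsSimpleModule R S₂ ∧ IsSimpleModule R S₃ ∧
            S₁ ⊓ (S₂ ⊔ S₃) = ⊥ ∧ S₂ ⊓ (S₁ ⊔ S₃) = ⊥ ∧ S₃ ⊓ (S₁ ⊔ S₂) = ⊥) := by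
  constructor
  · intro hconn
    by_cases hss : IsSemisimpleModule R V
    · right
      refine ⟨hss, ?_⟩
      obtain ⟨X⟩ := hconn.nonempty
      haveI : ComplementedLattice (Submodule R V) := hss.toComplementedLattice
      obtain ⟨y, hy⟩ := exists_isCompl X.1
      have hy0 : y ≠ ⊥ := fun h => X.2.2 (eq_top_of_isCompl_bot (h ▸ hy))
      have hyT : y ≠ ⊤ := fun h => X.2.1 (by
        have h1 := hy.inf_eq_bot
        rwa [h, inf_top_eq] at h1)
      have hnb : ¬ (IsAtom X.1 ∧ IsAtom y) := by
        rintro ⟨hxA, hyA⟩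
        have hnoadj : ∀ A B : ProperSubmodule R V, ¬ (intersectionGraph R V).Adj A B := by
          rintro A B ⟨hAB, hAB2⟩
          have hA := all_atoms hxA hyA hy A.2.1 A.2.2
          have hB := all_atoms hxA hyA hy B.2.1 B.2.2
          rcases hA.le_iff.mp (inf_le_left : A.1 ⊓ B.1 ≤ A.1) with h0 | h0
          · exact hAB2 h0
          · have hle : A.1 ≤ B.1 := h0.ge.trans inf_le_right
            exact hAB (Subtype.ext ((hB.le_iff_eq A.2.1).mp hle))
        have hXY : X ≠ (⟨y, hy0, hyT⟩ : ProperSubmodule R V) := by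
          intro h
          have h1 : X.1 = y := congrArg Subtype.val h
          apply X.2.1
          have h2 := hy.inf_eq_bot
          rw [← h1] at h2
          rwa [inf_idem] at h2
        exact not_connected_of_no_edges hnoadj hXY hconn
      rcases not_and_or.mp hnb with hxA | hyA
      · exact exists_three hss X.2.1 X.2.2 hxA
      · exact exists_three hss hy0 hyT hyA
    · exact Or.inl hss
  · rintro (hss | ⟨hss, S₁, S₂, S₃, h₁, h₂, h₃, i₁, i₂, i₃⟩)
    · have hex : ∃ x : Submodule R V, ∀ y, ¬ IsCompl x y := by
        by_contra hcon
        push_neg at hcon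
        exact hss { toComplementedLattice := ⟨fun a => hcon a⟩ }
      obtain ⟨x, hx⟩ := hex
      have hx0 : x ≠ ⊥ := fun h => hx ⊤ (h ▸ isCompl_bot_top)
      have hxT : x ≠ ⊤ := fun h => hx ⊥ (h ▸ isCompl_top_bot)
      haveI : Nonempty (ProperSubmodule R V) := ⟨⟨x, hx0, hxT⟩⟩
      refine SimpleGraph.Connected.mk (preconnected_aux ?_)
      intro u w hu hw hc
      exact hss { toComplementedLattice := ⟨fun z => complement_of_atom_pair hu hw hc z⟩ }
    · have a₁ := isSimpleModule_iff_isAtom.mp h₁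
      have a₂ := isSimpleModule_iff_isAtom.mp h₂
      have a₃ := isSimpleModule_iff_isAtom.mp h₃
      have hS1T : S₁ ≠ ⊤ := by
        intro h
        have hle : S₂ ≤ S₁ ⊔ S₃ := (le_top.trans h.ge).trans le_sup_left
        exact a₂.1 (by rw [← i₂]; exact (inf_eq_left.mpr hle).symm)
      haveI : Nonempty (ProperSubmodule R V) := ⟨⟨S₁, a₁.1, hS1T⟩⟩
      refine SimpleGraph.Connected.mk (preconnected_aux ?_)
      intro u w hu hw hc
      have hne_bot : S₁ ⊔ S₂ ≠ ⊥ := fun h =>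
        a₁.1 (le_bot_iff.mp (h ▸ (le_sup_left : S₁ ≤ S₁ ⊔ S₂)))
      have hne_top : S₁ ⊔ S₂ ≠ ⊤ := by
        intro h
        have hle : S₃ ≤ S₁ ⊔ S₂ := le_top.trans h.ge
        exact a₃.1 (by rw [← i₃]; exact (inf_eq_left.mpr hle).symm)
      have hall := all_atoms hu hw hc hne_bot hne_top
      have hlt : S₁ < S₁ ⊔ S₂ := lt_of_le_of_ne le_sup_left (by
        intro h
        have hle : S₂ ≤ S₁ ⊔ S₃ := (le_sup_right.trans h.ge).trans le_sup_left
        exact a₂.1 (by rw [← i₂]; exact (inf_eq_left.mpr hle).symm))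
      exact a₁.1 (hall.lt_iff.mp hlt)
end

section
/- The following are equivalent: (i) G(V) has no cycles; (ii) G(V) has no 3-cycles; (iii) either V has a composition series of length at most 2, or V has a composition series of length 3 and a unique maximal R-submodule. -/
/-- `V` has a composition series (from `⊥` to `⊤`) of length `n`. -/
def HasCompositionSeriesOfLength (R V : Type*) [Ring R] [AddCommGroup V] [Module R V]
    (n : ℕ) : Prop :=
  ∃ s : RelSeries {p : Submodule R V × Submodule R V | p.1 ⋖ p.2},
    s.head = ⊥ ∧ s.last = ⊤ ∧ s.length = n

section Aux

lemma aux_mk_triangle {X : Type*} (G : SimpleGraph X) {a b c : X}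
    (hab : G.Adj a b) (hbc : G.Adj b c) (hca : G.Adj c a) :
    ∃ (v : X) (w : G.Walk v v), w.IsCycle ∧ w.length = 3 := by
  refine ⟨a, .cons hab (.cons hbc (.cons hca .nil)), ?_, rfl⟩
  have h1 : a ≠ b := hab.ne
  have h2 : b ≠ c := hbc.ne
  have h3 : c ≠ a := hca.ne
  simp [SimpleGraph.Walk.isCycle_def, SimpleGraph.Walk.isTrail_def, Sym2.eq_iff, h1, h2, h3,
    h1.symm, h2.symm, h3.symm]

lemma aux_noCycle_of_noEdge {X : Type*} (G : SimpleGraph X) (h : ∀ a b : X, ¬ G.Adj a b)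
    (v : X) (c : G.Walk v v) : ¬ c.IsCycle := by
  intro hc
  cases c with
  | nil => exact hc.ne_nil rfl
  | cons h1 p => exact h _ _ h1

lemma aux_noCycle_of_star {X : Type*} (G : SimpleGraph X) (m : X)
    (h : ∀ a b : X, G.Adj a b → a = m ∨ b = m)
    (v : X) (c : G.Walk v v) : ¬ c.IsCycle := by
  intro hc
  have hlen := hc.three_le_length
  cases c with
  | nil => exact hc.ne_nil rfl
  | cons h1 p =>
    cases p with
    | nil => simp at hlen
    | cons h2 q =>
      cases q with
      | nil => simp at hlen
      | cons h3 r =>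
        have hnd := hc.support_nodup
        simp only [SimpleGraph.Walk.support_cons, List.tail_cons, List.nodup_cons] at hnd
        obtain ⟨hb, hc2, -⟩ := hnd
        rename_i b c2 d
        have hvr : v ∈ r.support := r.end_mem_support
        have hdr : d ∈ r.support := r.start_mem_support
        have hbc2 : b ≠ c2 := fun e => hb (by simp [e])
        have hbd : b ≠ d := fun e => hb (by simp [e, hdr])
        have hvc2 : v ≠ c2 := fun e => hc2 (e ▸ hvr)
        rcases h _ _ h2 with hbm | hc2m
        · rcases h _ _ h3 with h' | h'
          · exact hbc2 (hbm.trans h'.symm)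
          · exact hbd (hbm.trans h'.symm)
        · rcases h _ _ h1 with h' | h'
          · exact hvc2 (h'.trans hc2m.symm)
          · exact hbc2 (h'.trans hc2m.symm)

variable {R V : Type*} [Ring R] [AddCommGroup V] [Module R V]

lemma aux_sandwich {A M W : Submodule R V} (h1 : ⊥ ⋖ A) (h2 : A ⋖ M)
    (hW : W ≠ ⊥) (hWM : W < M) : ⊥ ⋖ W ∧ W ⋖ M := by
  rcases h1.wcovBy.eq_or_eq (bot_le : (⊥ : Submodule R V) ≤ W ⊓ A) inf_le_right with hWA | hWA
  · have hsup : W ⊔ A = M := by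
      rcases h2.wcovBy.eq_or_eq (le_sup_right : A ≤ W ⊔ A) (sup_le hWM.le h2.lt.le) with h | h
      · exfalso; apply hW
        have hWle : W ≤ A := le_sup_left.trans h.le
        rw [← hWA, inf_eq_left.mpr hWle]
      · exact h
    constructor
    · have := inf_covBy_of_covBy_sup_right (a := W) (b := A) (by rw [hsup]; exact h2)
      rwa [← hWA]
    · have := covBy_sup_of_inf_covBy_right (a := W) (b := A) (by rw [hWA]; exact h1)
      rwa [hsup] at this
  · have hA : A ≤ W := by rw [← hWA]; exact inf_le_left
    rcases h2.wcovBy.eq_or_eq hA hWM.le with h | h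
    · rw [h]; exact ⟨h1, h2⟩
    · exact absurd h hWM.ne

lemma aux_series_step (s : RelSeries {p : Submodule R V × Submodule R V | p.1 ⋖ p.2})
    {k : ℕ} (hk : k < s.length) :
    s.toFun ⟨k, by omega⟩ ⋖ s.toFun ⟨k + 1, by omega⟩ :=
  s.step ⟨k, hk⟩

lemma aux_series_head (s : RelSeries {p : Submodule R V × Submodule R V | p.1 ⋖ p.2}) :
    s.toFun ⟨0, by omega⟩ = s.head := by
  congr 1

lemma aux_series_last (s : RelSeries {p : Submodule R V × Submodule R V | p.1 ⋖ p.2}) :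
    s.toFun ⟨s.length, by omega⟩ = s.last := by
  congr 1

lemma aux_vertex3 {A B W : Submodule R V} (h1 : ⊥ ⋖ A) (h2 : A ⋖ B) (h3 : B ⋖ ⊤)
    (huniq : ∀ N : Submodule R V, IsCoatom N → N = B)
    (hW : W ≠ ⊥) (hWtop : W ≠ ⊤) (hWB : W ≠ B) : ⊥ ⋖ W := by
  rcases h3.wcovBy.eq_or_eq (le_sup_right : B ≤ W ⊔ B) le_top with hsB | hsT
  · have hlt : W < B := lt_of_le_of_ne (le_sup_left.trans hsB.le) hWB
    exact (aux_sandwich h1 h2 hW hlt).1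
  · have hZW : W ⊓ B ⋖ W :=
      inf_covBy_of_covBy_sup_right (a := W) (b := B) (by rw [hsT]; exact h3)
    by_cases hZ : W ⊓ B = ⊥
    · rwa [hZ] at hZW
    · exfalso
      have hZB : W ⊓ B < B := by
        rcases lt_or_eq_of_le (inf_le_right : W ⊓ B ≤ B) with h | h
        · exact h
        · exfalso
          have hBW : B ≤ W := by rw [← h]; exact inf_le_left
          apply hWtop
          rw [← hsT, sup_eq_left.mpr hBW]
      have hZcov : W ⊓ B ⋖ B := (aux_sandwich h1 h2 hZ hZB).2
      have hWcoatom : W ⋖ ⊤ := by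
        have := covBy_sup_of_inf_covBy_right (a := W) (b := B) hZcov
        rwa [hsT] at this
      exact hWB (huniq W hWcoatom.isCoatom)

lemma aux_atoms_nonadj {U W : ProperSubmodule R V} (hU : ⊥ ⋖ U.1) (hW : ⊥ ⋖ W.1) :
    ¬ (intersectionGraph R V).Adj U W := by
  rintro ⟨hne, hinf⟩
  have h1 : U.1 ⊓ W.1 = U.1 := by
    rcases hU.wcovBy.eq_or_eq bot_le (inf_le_left : U.1 ⊓ W.1 ≤ U.1) with h | h
    · exact absurd h hinf
    · exact h
  have h2 : U.1 ⊓ W.1 = W.1 := by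
    rcases hW.wcovBy.eq_or_eq bot_le (inf_le_right : U.1 ⊓ W.1 ≤ W.1) with h | h
    · exact absurd h hinf
    · exact h
  exact hne (Subtype.ext (h1.symm.trans h2))

lemma aux_triangle_of_chain {A B C : Submodule R V} (hA : ⊥ < A) (hAB : A < B) (hBC : B < C)
    (hC : C < ⊤) :
    ∃ (v : ProperSubmodule R V) (w : (intersectionGraph R V).Walk v v),
      w.IsCycle ∧ w.length = 3 := by
  have hAtop : A < ⊤ := hAB.trans (hBC.trans hC)
  have hBbot : ⊥ < B := hA.trans hAB
  have hCbot : ⊥ < C := hBbot.trans hBC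
  have hBtop : B < ⊤ := hBC.trans hC
  refine aux_mk_triangle (intersectionGraph R V)
    (a := ⟨A, hA.ne', hAtop.ne⟩) (b := ⟨B, hBbot.ne', hBtop.ne⟩) (c := ⟨C, hCbot.ne', hC.ne⟩)
    ⟨?_, ?_⟩ ⟨?_, ?_⟩ ⟨?_, ?_⟩
  · exact fun e => hAB.ne (congrArg (fun x => x.1) e)
  · rw [inf_eq_left.mpr hAB.le]; exact hA.ne'
  · exact fun e => hBC.ne (congrArg (fun x => x.1) e)
  · rw [inf_eq_left.mpr hBC.le]; exact hBbot.ne'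
  · exact fun e => (hAB.trans hBC).ne' (congrArg (fun x => x.1) e)
  · rw [inf_eq_right.mpr (hAB.trans hBC).le]; exact hA.ne'

lemma aux_two_series {N : Submodule R V} (h1 : ⊥ ⋖ N) (h2 : N ⋖ ⊤) :
    HasCompositionSeriesOfLength R V 2 := by
  refine ⟨⟨2, ![⊥, N, ⊤], ?_⟩, ?_, ?_, rfl⟩
  · intro i
    fin_cases i
    · simpa using h1
    · simpa using h2
  · simp [RelSeries.head]
  · simp [RelSeries.last, Fin.last]

end Aux

section Key

variable {R V : Type*} [Ring R] [AddCommGroup V] [Module R V]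

lemma aux_series_last' (s : RelSeries {p : Submodule R V × Submodule R V | p.1 ⋖ p.2})
    {n : ℕ} (hlen : s.length = n) (h : n < s.length + 1) : s.toFun ⟨n, h⟩ = s.last := by
  subst hlen
  exact aux_series_last s

lemma aux_key1
    (hC : (∃ n ≤ 2, HasCompositionSeriesOfLength R V n) ∨
        (HasCompositionSeriesOfLength R V 3 ∧ ∃! M : Submodule R V, IsCoatom M))
    (v : ProperSubmodule R V) (c : (intersectionGraph R V).Walk v v) : ¬ c.IsCycle := by
  rcases hC with ⟨n, hn, s, hh, hl, hlen⟩ | ⟨⟨s, hh, hl, hlen⟩, M, hM, hMuniq⟩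
  · interval_cases n
    · -- length 0 : ⊥ = ⊤, no vertices
      intro _
      have e : (⊥ : Submodule R V) = ⊤ := by
        rw [← hh, ← hl, ← aux_series_head s, ← aux_series_last' s hlen (by omega)]
      have : v.1 ≤ ⊥ := le_top.trans e.symm.le
      exact v.2.1 (le_bot_iff.mp this)
    · -- length 1 : ⊥ ⋖ ⊤, no vertices
      intro _
      have st := aux_series_step s (k := 0) (by omega)
      have e0 : s.toFun ⟨0, by omega⟩ = ⊥ := (aux_series_head s).trans hh
      have e1 : s.toFun ⟨1, by omega⟩ = ⊤ := aux_series_last' s hlen (by omega) |>.trans hl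
      rw [e0, e1] at st
      exact st.2 (bot_lt_iff_ne_bot.mpr v.2.1) (lt_top_iff_ne_top.mpr v.2.2)
    · -- length 2 : all vertices are atoms, so no edges
      have st0 := aux_series_step s (k := 0) (by omega)
      have st1 := aux_series_step s (k := 1) (by omega)
      have e0 : s.toFun ⟨0, by omega⟩ = ⊥ := (aux_series_head s).trans hh
      have e2 : s.toFun ⟨2, by omega⟩ = ⊤ := aux_series_last' s hlen (by omega) |>.trans hl
      rw [e0] at st0
      rw [e2] at st1
      refine aux_noCycle_of_noEdge _ (fun U W hUW => ?_) v c
      have hU : ⊥ ⋖ U.1 :=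
        (aux_sandwich st0 st1 U.2.1 (lt_top_iff_ne_top.mpr U.2.2)).1
      have hW : ⊥ ⋖ W.1 :=
        (aux_sandwich st0 st1 W.2.1 (lt_top_iff_ne_top.mpr W.2.2)).1
      exact aux_atoms_nonadj hU hW hUW
  · -- length 3 with a unique coatom : star graph
    have st0 := aux_series_step s (k := 0) (by omega)
    have st1 := aux_series_step s (k := 1) (by omega)
    have st2 := aux_series_step s (k := 2) (by omega)
    have e0 : s.toFun ⟨0, by omega⟩ = ⊥ := (aux_series_head s).trans hh
    have e3 : s.toFun ⟨3, by omega⟩ = ⊤ := aux_series_last' s hlen (by omega) |>.trans hl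
    rw [e0] at st0
    rw [e3] at st2
    set A := s.toFun ⟨1, by omega⟩ with hA
    set B := s.toFun ⟨2, by omega⟩ with hB
    have huniq : ∀ N : Submodule R V, IsCoatom N → N = B :=
      fun N hN => (hMuniq N hN).trans (hMuniq B st2.isCoatom).symm
    refine aux_noCycle_of_star _ (⟨B, (st0.lt.trans st1.lt).ne', st2.lt.ne⟩ : ProperSubmodule R V)
      (fun a b hab => ?_) v c
    by_contra hcon
    push_neg at hcon
    have ha1 : a.1 ≠ B := fun e => hcon.1 (Subtype.ext e)
    have hb1 : b.1 ≠ B := fun e => hcon.2 (Subtype.ext e)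
    have hAa : ⊥ ⋖ a.1 := aux_vertex3 st0 st1 st2 huniq a.2.1 a.2.2 ha1
    have hAb : ⊥ ⋖ b.1 := aux_vertex3 st0 st1 st2 huniq b.2.1 b.2.2 hb1
    exact aux_atoms_nonadj hAa hAb hab

lemma aux_key2'
    (hnC : ¬ ((∃ n ≤ 2, HasCompositionSeriesOfLength R V n) ∨
        (HasCompositionSeriesOfLength R V 3 ∧ ∃! M : Submodule R V, IsCoatom M))) :
    ∃ (v : ProperSubmodule R V) (w : (intersectionGraph R V).Walk v v),
      w.IsCycle ∧ w.length = 3 := by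
  rw [not_or] at hnC
  obtain ⟨h2, h3⟩ := hnC
  by_cases hH3 : HasCompositionSeriesOfLength R V 3
  · have hnu : ¬ ∃! M : Submodule R V, IsCoatom M := fun h => h3 ⟨hH3, h⟩
    obtain ⟨s, hh, hl, hlen⟩ := hH3
    have st0 := aux_series_step s (k := 0) (by omega)
    have st1 := aux_series_step s (k := 1) (by omega)
    have st2 := aux_series_step s (k := 2) (by omega)
    have e0 : s.toFun ⟨0, by omega⟩ = ⊥ := (aux_series_head s).trans hh
    have e3 : s.toFun ⟨3, by omega⟩ = ⊤ := aux_series_last' s hlen (by omega) |>.trans hl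
    rw [e0] at st0
    rw [e3] at st2
    set B := s.toFun ⟨2, by omega⟩ with hB
    have hcoB : IsCoatom B := st2.isCoatom
    obtain ⟨N, hN, hNB⟩ : ∃ N : Submodule R V, IsCoatom N ∧ N ≠ B := by
      by_contra hall
      push_neg at hall
      exact hnu ⟨B, hcoB, hall⟩
    have hsup : N ⊔ B = ⊤ := by
      rcases (le_sup_right : B ≤ N ⊔ B).lt_or_eq with h | h
      · exact hcoB.2 _ h
      · have hNleB : N ≤ B := le_sup_left.trans h.symm.le
        exact absurd (hN.2 B (lt_of_le_of_ne hNleB hNB)) hcoB.1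
    have hZB : N ⊓ B ⋖ B :=
      inf_covBy_of_covBy_sup_left (a := N) (b := B) (by rw [hsup]; exact hN.covBy_top)
    have hZN : N ⊓ B ⋖ N :=
      inf_covBy_of_covBy_sup_right (a := N) (b := B) (by rw [hsup]; exact hcoB.covBy_top)
    by_cases hZ : N ⊓ B = ⊥
    · exfalso
      rw [hZ] at hZB
      exact h2 ⟨2, le_refl 2, aux_two_series hZB st2⟩
    · have hZtop : N ⊓ B ≠ ⊤ := (hZB.lt.trans (lt_top_iff_ne_top.mpr hcoB.1)).ne
      have hNbot : N ≠ ⊥ := ((bot_lt_iff_ne_bot.mpr hZ).trans hZN.lt).ne'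
      have hBbot : B ≠ ⊥ := ((bot_lt_iff_ne_bot.mpr hZ).trans hZB.lt).ne'
      refine aux_mk_triangle (intersectionGraph R V)
        (a := ⟨N, hNbot, hN.1⟩) (b := ⟨B, hBbot, hcoB.1⟩) (c := ⟨N ⊓ B, hZ, hZtop⟩)
        ⟨?_, ?_⟩ ⟨?_, ?_⟩ ⟨?_, ?_⟩
      · exact fun e => hNB (congrArg (fun x => x.1) e)
      · exact hZ
      · exact fun e => hZB.lt.ne' (congrArg (fun x => x.1) e)
      · rw [inf_eq_right.mpr (inf_le_right : N ⊓ B ≤ B)]; exact hZ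
      · exact fun e => hZN.lt.ne (congrArg (fun x => x.1) e)
      · rw [inf_eq_left.mpr (inf_le_left : N ⊓ B ≤ N)]; exact hZ
  · have hno : ∀ n ≤ 3, ¬ HasCompositionSeriesOfLength R V n := by
      intro n hn hs
      rcases eq_or_lt_of_le hn with rfl | h
      · exact hH3 hs
      · exact h2 ⟨n, by omega, hs⟩
    by_cases hNoe : IsNoetherian R V
    · by_cases hArt : IsArtinian R V
      · obtain ⟨s, hh, hl⟩ := exists_compositionSeries_of_isNoetherian_isArtinian R V
        let t : RelSeries {p : Submodule R V × Submodule R V | p.1 ⋖ p.2} :=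
          ⟨s.length, s.toFun, s.step⟩
        have hh' : t.head = ⊥ := hh
        have hl' : t.last = ⊤ := hl
        have hlen4 : 4 ≤ t.length := by
          by_contra h
          push_neg at h
          exact hno t.length (by omega) ⟨t, hh', hl', rfl⟩
        have st0 := aux_series_step t (k := 0) (by omega)
        have st1 := aux_series_step t (k := 1) (by omega)
        have st2 := aux_series_step t (k := 2) (by omega)
        have st3 := aux_series_step t (k := 3) (by omega)
        exact aux_triangle_of_chain (bot_le.trans_lt st0.lt) st1.lt st2.lt
          (st3.lt.trans_le le_top)
      · rw [← monotone_stabilizes_iff_artinian] at hArt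
        push_neg at hArt
        obtain ⟨f, hf⟩ := hArt
        obtain ⟨m1, hm1, ne1⟩ := hf 0
        obtain ⟨m2, hm2, ne2⟩ := hf m1
        obtain ⟨m3, hm3, ne3⟩ := hf m2
        obtain ⟨m4, hm4, ne4⟩ := hf m3
        have l1 : OrderDual.ofDual (f m1) < OrderDual.ofDual (f 0) :=
          lt_of_le_of_ne (f.monotone hm1) ne1.symm
        have l2 : OrderDual.ofDual (f m2) < OrderDual.ofDual (f m1) :=
          lt_of_le_of_ne (f.monotone hm2) ne2.symm
        have l3 : OrderDual.ofDual (f m3) < OrderDual.ofDual (f m2) :=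
          lt_of_le_of_ne (f.monotone hm3) ne3.symm
        have l4 : OrderDual.ofDual (f m4) < OrderDual.ofDual (f m3) :=
          lt_of_le_of_ne (f.monotone hm4) ne4.symm
        exact aux_triangle_of_chain (bot_le.trans_lt l4) l3 l2 (l1.trans_le le_top)
    · rw [← monotone_stabilizes_iff_noetherian] at hNoe
      push_neg at hNoe
      obtain ⟨f, hf⟩ := hNoe
      obtain ⟨m1, hm1, ne1⟩ := hf 0
      obtain ⟨m2, hm2, ne2⟩ := hf m1
      obtain ⟨m3, hm3, ne3⟩ := hf m2
      obtain ⟨m4, hm4, ne4⟩ := hf m3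
      have l1 : f 0 < f m1 := lt_of_le_of_ne (f.monotone hm1) ne1
      have l2 : f m1 < f m2 := lt_of_le_of_ne (f.monotone hm2) ne2
      have l3 : f m2 < f m3 := lt_of_le_of_ne (f.monotone hm3) ne3
      have l4 : f m3 < f m4 := lt_of_le_of_ne (f.monotone hm4) ne4
      exact aux_triangle_of_chain (bot_le.trans_lt l1) l2 l3 (l4.trans_le le_top)

end Key

theorem stmt8 (R V : Type*) [Ring R] [AddCommGroup V] [Module R V] :
    ((∀ (v : ProperSubmodule R V) (c : (intersectionGraph R V).Walk v v), ¬ c.IsCycle) ↔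
      (∀ (v : ProperSubmodule R V) (c : (intersectionGraph R V).Walk v v),
        ¬ (c.IsCycle ∧ c.length = 3))) ∧
    ((∀ (v : ProperSubmodule R V) (c : (intersectionGraph R V).Walk v v), ¬ c.IsCycle) ↔
      ((∃ n ≤ 2, HasCompositionSeriesOfLength R V n) ∨
        (HasCompositionSeriesOfLength R V 3 ∧
          ∃! M : Submodule R V, IsCoatom M))) := by
  have key2 : (∀ (v : ProperSubmodule R V) (c : (intersectionGraph R V).Walk v v),
      ¬ (c.IsCycle ∧ c.length = 3)) →
      ((∃ n ≤ 2, HasCompositionSeriesOfLength R V n) ∨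
        (HasCompositionSeriesOfLength R V 3 ∧ ∃! M : Submodule R V, IsCoatom M)) := by
    intro h
    by_contra hnC
    obtain ⟨v, w, hw1, hw2⟩ := aux_key2' hnC
    exact h v w ⟨hw1, hw2⟩
  exact ⟨⟨fun h v c hc => h v c hc.1, fun h => aux_key1 (key2 h)⟩,
    ⟨fun h => key2 (fun v c hc => h v c hc.1), aux_key1⟩⟩
end
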